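/- In the counterexample construction with instances I and I' as defined (I'(R_k) = I(R_k) ∪ {t_k}, all else equal), the tuple t[U] belongs to Q(I') but not to Q(I), so Q(I) ≠ Q(I'). -/
import Mathlib


open scoped Classical

/-- Restriction `t[U]` of a tuple to an attribute set `U`. -/
noncomputable def restrict {A B : Type*} (U : Set A) (t : A → B) : A → Option B :=
  fun a => if a ∈ U then some (t a) else none

/-- Project-select query `π_U σ_θ S` under set semantics. -/
noncomputable def psView {A B : Type*} (U : Set A) (θ : (A → B) → Prop)
    (S : Set (A → B)) : Set (A → Option B) :=
  {r | ∃ t ∈ S, θ t ∧ r = restrict U t}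

/-- The product tuple of a sequence of tuples `⟨t₁,…,t_m⟩`. -/
def prodTup {m : ℕ} {A B : Type*} (ts : Fin m → A → B) : Fin m × A → B :=
  fun p => ts p.1 p.2

/-- The project-select-join query `Q = π_U σ_θ (R₁ × ⋯ × R_m)` with no self joins. -/
noncomputable def joinQuery {m : ℕ} {A B : Type*} (U : Set (Fin m × A))
    (θ : (Fin m → A → B) → Prop) (I : Fin m → Set (A → B)) :
    Set (Fin m × A → Option B) :=
  {r | ∃ ts : Fin m → A → B, (∀ i, ts i ∈ I i) ∧ θ ts ∧ r = restrict U (prodTup ts)}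

/-- Condition (⋆) for index `i`. -/
def StarCond {m : ℕ} {A B : Type*} (U : Set (Fin m × A)) (θ : (Fin m → A → B) → Prop)
    (n : Fin m → ℕ) (Uv : ∀ i, Fin (n i) → Set A)
    (θv : ∀ i, Fin (n i) → (A → B) → Prop) (i : Fin m) : Prop :=
  ∀ ts : Fin m → A → B, θ ts →
    ∃ j : Fin (n i), θv i j (ts i) ∧
      ∀ t' : A → B, θv i j t' → restrict (Uv i j) t' = restrict (Uv i j) (ts i) →
        θ (Function.update ts i t') ∧
          restrict U (prodTup (Function.update ts i t')) = restrict U (prodTup ts)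

/-- `V` determines `Q`. -/
def Determines {m : ℕ} {A B : Type*} (U : Set (Fin m × A)) (θ : (Fin m → A → B) → Prop)
    (n : Fin m → ℕ) (Uv : ∀ i, Fin (n i) → Set A)
    (θv : ∀ i, Fin (n i) → (A → B) → Prop) : Prop :=
  ∀ I I' : Fin m → Set (A → B),
    (∀ i, ∀ j : Fin (n i), psView (Uv i j) (θv i j) (I i) = psView (Uv i j) (θv i j) (I' i)) →
    joinQuery U θ I = joinQuery U θ I'

theorem counterexample_query_differs {m : ℕ} {A B : Type*} (U : Set (Fin m × A))
    (θ : (Fin m → A → B) → Prop) (n : Fin m → ℕ) (Uv : ∀ i, Fin (n i) → Set A)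
    (θv : ∀ i, Fin (n i) → (A → B) → Prop) (k : Fin m)
    (ts : Fin m → A → B) (hθ : θ ts)
    (t' : Fin (n k) → A → B)
    (hwit : ∀ j : Fin (n k), θv k j (ts k) →
      θv k j (t' j) ∧ restrict (Uv k j) (t' j) = restrict (Uv k j) (ts k) ∧
        ¬ (θ (Function.update ts k (t' j)) ∧
            restrict U (prodTup (Function.update ts k (t' j))) = restrict U (prodTup ts)))
    (I I' : Fin m → Set (A → B))
    (hI : ∀ i : Fin m, I i =
      if i = k then {s | ∃ j : Fin (n k), θv k j (ts k) ∧ s = t' j} else {ts i})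
    (hI' : ∀ i : Fin m, I' i = if i = k then I k ∪ {ts k} else I i) :
    restrict U (prodTup ts) ∈ joinQuery U θ I' ∧
    restrict U (prodTup ts) ∉ joinQuery U θ I ∧
    joinQuery U θ I ≠ joinQuery U θ I' := by
  have hmem : restrict U (prodTup ts) ∈ joinQuery U θ I' := by
    refine ⟨ts, fun i => ?_, hθ, rfl⟩
    rw [hI' i]
    by_cases h : i = k
    · subst h; simp
    · simp only [if_neg h]
      rw [hI i, if_neg h]; rfl
  have hnot : restrict U (prodTup ts) ∉ joinQuery U θ I := by
    rintro ⟨ss, hss, hθss, heq⟩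
    have hk := hss k
    rw [hI k, if_pos rfl] at hk
    obtain ⟨j, hj, hsk⟩ := hk
    have hupd : ss = Function.update ts k (t' j) := by
      funext i
      by_cases h : i = k
      · subst h; simp [hsk]
      · have := hss i
        rw [hI i, if_neg h] at this
        simp only [Function.update, dif_neg h]
        exact this
    obtain ⟨_, _, hcon⟩ := hwit j hj
    exact hcon ⟨hupd ▸ hθss, by rw [← hupd, ← heq]⟩
  exact ⟨hmem, hnot, fun h => hnot (h ▸ hmem)⟩
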